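/- Let r ≥ 2, k ≥ 1, n ≥ rk, and let A be a family of k-subsets of {1,...,n} of size |A| = C(n,k) − C(n−r+1,k) + m for some m ≥ 1 such that A is the union of the stars S_1,...,S_{r−1} together with a subfamily T of size m of k-sets disjoint from {1,...,r−1}. Then the number of r-element pairwise disjoint subfamilies of A is at least m · ∏_{i=1}^{r−1} C(n − ik − (r−1−i) − 1, k−1). -/

import Mathlib

open Finset

/-- Number of choices at stage `i`. -/
private def trm (n r k i : ℕ) : ℕ := Nat.choose (n - i * k - (r - 1 - i) - 1) (k - 1)

/-- Candidate sets for the star centered at `j`: `k`-subsets of `range n`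
meeting `range (r-1)` exactly in `{j}` and disjoint from all sets already in `E`. -/
private def cand (n r k : ℕ) (j : ℕ) (E : Finset (Finset ℕ)) : Finset (Finset ℕ) :=
  ((Finset.range n).powersetCard k).filter
    (fun A => A ∩ Finset.range (r - 1) = {j} ∧ Disjoint A (E.sup id))

private lemma mem_cand {n r k j : ℕ} {E : Finset (Finset ℕ)} {A : Finset ℕ} :
    A ∈ cand n r k j E ↔
      A ⊆ Finset.range n ∧ A.card = k ∧ A ∩ Finset.range (r - 1) = {j} ∧
        Disjoint A (E.sup id) := by
  simp [cand, Finset.mem_filter, Finset.mem_powersetCard, and_assoc]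

/-- Greedy extension: add candidate sets for centers `j, j+1, …, j+t-1` to `E`. -/
private def gfam (n r k : ℕ) : ℕ → ℕ → Finset (Finset ℕ) → Finset (Finset (Finset ℕ))
  | 0, _, E => {E}
  | (t+1), j, E => (cand n r k j E).biUnion (fun A => gfam n r k t (j+1) (insert A E))

private lemma gfam_new {n r k : ℕ} :
    ∀ (t j : ℕ) (E F : Finset (Finset ℕ)), F ∈ gfam n r k t j E →
      E ⊆ F ∧ ∀ C ∈ F, C ∉ E →
        C ⊆ Finset.range n ∧ C.card = k ∧ Disjoint C (E.sup id) ∧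
          ∃ i, j ≤ i ∧ C ∩ Finset.range (r - 1) = {i}
  | 0, j, E, F, hF => by
      simp only [gfam, Finset.mem_singleton] at hF
      subst hF
      exact ⟨Finset.Subset.refl _, fun C hC hC' => absurd hC hC'⟩
  | (t+1), j, E, F, hF => by
      simp only [gfam, Finset.mem_biUnion] at hF
      obtain ⟨A, hA, hF⟩ := hF
      obtain ⟨hA1, hA2, hA3, hA4⟩ := mem_cand.1 hA
      obtain ⟨hsub, hnew⟩ := gfam_new t (j+1) (insert A E) F hF
      refine ⟨(Finset.subset_insert A E).trans hsub, fun C hC hCE => ?_⟩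
      by_cases hCA : C = A
      · subst hCA
        exact ⟨hA1, hA2, hA4, j, le_refl j, hA3⟩
      · have hC' : C ∉ insert A E := by
          simp only [Finset.mem_insert]
          tauto
        obtain ⟨h1, h2, h3, i, hi, h4⟩ := hnew C hC hC'
        refine ⟨h1, h2, ?_, i, by omega, h4⟩
        have : E.sup id ≤ (insert A E).sup id := Finset.sup_mono (Finset.subset_insert A E)
        exact h3.mono_right this

private lemma gfam_disj {n r k : ℕ} :
    ∀ (t j : ℕ) (E F : Finset (Finset ℕ)), F ∈ gfam n r k t j E →
      (∀ C ∈ E, ∀ D ∈ E, C ≠ D → Disjoint C D) →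
      ∀ C ∈ F, ∀ D ∈ F, C ≠ D → Disjoint C D
  | 0, j, E, F, hF, hE => by
      simp only [gfam, Finset.mem_singleton] at hF
      subst hF; exact hE
  | (t+1), j, E, F, hF, hE => by
      simp only [gfam, Finset.mem_biUnion] at hF
      obtain ⟨A, hA, hF⟩ := hF
      obtain ⟨hA1, hA2, hA3, hA4⟩ := mem_cand.1 hA
      refine gfam_disj t (j+1) (insert A E) F hF ?_
      have hAD : ∀ D ∈ E, Disjoint A D := fun D hD =>
        hA4.mono_right (Finset.le_sup (f := id) hD)
      intro C hC D hD hCD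
      rcases Finset.mem_insert.1 hC with hC1 | hC1
      · rcases Finset.mem_insert.1 hD with hD1 | hD1
        · exact absurd (hC1.trans hD1.symm) hCD
        · subst hC1; exact hAD D hD1
      · rcases Finset.mem_insert.1 hD with hD1 | hD1
        · subst hD1; exact (hAD C hC1).symm
        · exact hE C hC1 D hD1 hCD

private lemma gfam_card_eq {n r k : ℕ} :
    ∀ (t j : ℕ) (E F : Finset (Finset ℕ)), F ∈ gfam n r k t j E →
      (∀ C ∈ E, C ∩ Finset.range (r - 1) ⊆ Finset.range j) →
      F.card = E.card + t
  | 0, j, E, F, hF, _ => by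
      simp only [gfam, Finset.mem_singleton] at hF
      subst hF; simp
  | (t+1), j, E, F, hF, hinv => by
      simp only [gfam, Finset.mem_biUnion] at hF
      obtain ⟨A, hA, hF⟩ := hF
      obtain ⟨hA1, hA2, hA3, hA4⟩ := mem_cand.1 hA
      have hAE : A ∉ E := by
        intro hAE
        have hj : j ∈ A ∩ Finset.range (r - 1) := by rw [hA3]; exact Finset.mem_singleton_self j
        have := hinv A hAE hj
        simp at this
      have hinv' : ∀ C ∈ insert A E, C ∩ Finset.range (r - 1) ⊆ Finset.range (j+1) := by
        intro C hC
        rcases Finset.mem_insert.1 hC with hC1 | hC1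
        · subst hC1
          rw [hA3]
          intro x hx
          simp only [Finset.mem_singleton] at hx
          exact Finset.mem_range.2 (by omega)
        · exact (hinv C hC1).trans (Finset.range_subset_range.2 (Nat.le_succ j))
      have := gfam_card_eq t (j+1) (insert A E) F hF hinv'
      rw [this, Finset.card_insert_of_notMem hAE]
      omega

private lemma cand_card_le {n r k : ℕ} (hk : 1 ≤ k) (hrn : r ≤ n) (j : ℕ)
    (hj : j + 1 ≤ r - 1) (E : Finset (Finset ℕ))
    (hinv : (E.sup id) ∩ Finset.range (r - 1) = Finset.range j)
    (hUcard : (E.sup id).card ≤ (j + 1) * k)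
    (hUsub : E.sup id ⊆ Finset.range n) :
    trm n r k (j+1) ≤ (cand n r k j E).card := by
  classical
  set U := E.sup id with hU
  set X := Finset.range (r - 1) ∪ U with hXdef
  have hXsub : X ⊆ Finset.range n := by
    apply Finset.union_subset _ hUsub
    exact Finset.range_subset_range.2 (by omega)
  have hXcard : X.card + j = (r - 1) + U.card := by
    have h1 : X.card + (Finset.range (r - 1) ∩ U).card
        = (Finset.range (r - 1)).card + U.card := Finset.card_union_add_card_inter _ _
    have h2 : Finset.range (r - 1) ∩ U = Finset.range j := by
      rw [Finset.inter_comm]; exact hinv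
    rw [h2] at h1
    simpa using h1
  have havail : (Finset.range n \ X).card = n - X.card := by
    rw [Finset.card_sdiff_of_subset hXsub, Finset.card_range]
  have hjX : j ∈ X := by
    apply Finset.mem_union_left
    exact Finset.mem_range.2 (by omega)
  have hinj : ((Finset.range n \ X).powersetCard (k - 1)).card ≤ (cand n r k j E).card := by
    apply Finset.card_le_card_of_injOn (fun S => insert j S)
    · intro S hS
      rw [Finset.mem_coe, Finset.mem_powersetCard] at hS
      obtain ⟨hS1, hS2⟩ := hS
      have hjS : j ∉ S := fun h => ((Finset.mem_sdiff.1 (hS1 h)).2) hjX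
      have hSX : ∀ x ∈ S, x ∉ X := fun x hx => (Finset.mem_sdiff.1 (hS1 hx)).2
      rw [Finset.mem_coe, mem_cand]
      refine ⟨?_, ?_, ?_, ?_⟩
      · apply Finset.insert_subset (Finset.mem_range.2 (by omega))
        exact hS1.trans (Finset.sdiff_subset)
      · rw [Finset.card_insert_of_notMem hjS, hS2]; omega
      · ext x
        simp only [Finset.mem_inter, Finset.mem_insert, Finset.mem_range,
          Finset.mem_singleton]
        constructor
        · rintro ⟨hx1 | hxS, hxr⟩
          · exact hx1
          · exact absurd (Finset.mem_union_left _ (Finset.mem_range.2 hxr)) (hSX x hxS)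
        · rintro rfl
          exact ⟨Or.inl rfl, by omega⟩
      · rw [Finset.disjoint_left]
        intro x hx hxU
        rcases Finset.mem_insert.1 hx with hx1 | hxS
        · have : x ∈ Finset.range j := by
            rw [← hinv]
            refine Finset.mem_inter.2 ⟨hxU, Finset.mem_range.2 ?_⟩
            omega
          rw [Finset.mem_range] at this
          omega
        · exact hSX x hxS (Finset.mem_union_right _ hxU)
    · intro S hS S' hS' hSS'
      rw [Finset.mem_coe, Finset.mem_powersetCard] at hS hS'
      have hjS : j ∉ S := fun h => ((Finset.mem_sdiff.1 (hS.1 h)).2) hjX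
      have hjS' : j ∉ S' := fun h => ((Finset.mem_sdiff.1 (hS'.1 h)).2) hjX
      have := congrArg (fun s => Finset.erase s j) hSS'
      simpa [Finset.erase_insert hjS, Finset.erase_insert hjS'] using this
  rw [Finset.card_powersetCard, havail] at hinj
  refine le_trans (Nat.choose_le_choose (k - 1) ?_) hinj
  have hXn : X.card ≤ n := by
    have := Finset.card_le_card hXsub
    simpa using this
  unfold trm at *
  omega

private lemma gfam_card {n r k : ℕ} (hk : 1 ≤ k) (hrn : r ≤ n) :
    ∀ (t j : ℕ) (E : Finset (Finset ℕ)), j + t ≤ r - 1 →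
      (E.sup id) ∩ Finset.range (r - 1) = Finset.range j →
      (E.sup id).card ≤ (j + 1) * k →
      E.sup id ⊆ Finset.range n →
      ∏ s ∈ Finset.range t, trm n r k (j+1+s) ≤ (gfam n r k t j E).card
  | 0, j, E, _, _, _, _ => by simp [gfam]
  | (t+1), j, E, hjt, hinv, hUc, hUs => by
      classical
      -- fibers are pairwise disjoint
      have hfib : ∀ A ∈ cand n r k j E, ∀ A' ∈ cand n r k j E, A ≠ A' →
          Disjoint (gfam n r k t (j+1) (insert A E)) (gfam n r k t (j+1) (insert A' E)) := by
        intro A hA A' hA' hne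
        rw [Finset.disjoint_left]
        intro F hF hF'
        obtain ⟨hA'1, hA'2, hA'3, hA'4⟩ := mem_cand.1 hA'
        have hA'F : A' ∈ F :=
          (gfam_new t (j+1) (insert A' E) F hF').1 (Finset.mem_insert_self A' E)
        have hA'E : A' ∉ E := by
          intro hmem
          have hj : j ∈ A' := by
            have : j ∈ A' ∩ Finset.range (r - 1) := by
              rw [hA'3]; exact Finset.mem_singleton_self j
            exact (Finset.mem_inter.1 this).1
          have : j ∈ (E.sup id) ∩ Finset.range (r - 1) :=
            Finset.mem_inter.2 ⟨Finset.mem_sup.2 ⟨A', hmem, hj⟩, Finset.mem_range.2 (by omega)⟩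
          rw [hinv] at this
          simp at this
        have hA'ins : A' ∉ insert A E := by
          simp only [Finset.mem_insert]
          tauto
        obtain ⟨_, _, _, i, hi, h4⟩ := (gfam_new t (j+1) (insert A E) F hF).2 A' hA'F hA'ins
        rw [hA'3] at h4
        have : j = i := Finset.singleton_injective h4
        omega
      rw [gfam, Finset.card_biUnion hfib]
      have hstep : ∀ A ∈ cand n r k j E,
          ∏ s ∈ Finset.range t, trm n r k (j+1+1+s)
            ≤ (gfam n r k t (j+1) (insert A E)).card := by
        intro A hA
        obtain ⟨hA1, hA2, hA3, hA4⟩ := mem_cand.1 hA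
        have hsup : (insert A E).sup id = A ∪ E.sup id := by
          rw [Finset.sup_insert]; rfl
        apply gfam_card hk hrn t (j+1) (insert A E)
        · omega
        · rw [hsup, Finset.union_inter_distrib_right, hA3, hinv]
          rw [Finset.range_add_one]
          ext x; simp [or_comm]
        · rw [hsup]
          calc (A ∪ E.sup id).card ≤ A.card + (E.sup id).card := Finset.card_union_le _ _
            _ ≤ k + (j+1) * k := by omega
            _ = (j+1+1) * k := by ring
        · rw [hsup]
          exact Finset.union_subset hA1 hUs
      calc ∏ s ∈ Finset.range (t+1), trm n r k (j+1+s)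
          = (∏ s ∈ Finset.range t, trm n r k (j+1+(s+1))) * trm n r k (j+1+0) :=
            Finset.prod_range_succ' _ t
        _ = trm n r k (j+1) * ∏ s ∈ Finset.range t, trm n r k (j+1+1+s) := by
            rw [mul_comm]
            have h0 : j+1+0 = j+1 := by omega
            rw [h0]
            congr 1
            apply Finset.prod_congr rfl
            intro s _
            have h : j+1+(s+1) = j+1+1+s := by omega
            rw [h]
        _ ≤ (cand n r k j E).card * ∏ s ∈ Finset.range t, trm n r k (j+1+1+s) :=
            Nat.mul_le_mul_right _ (cand_card_le hk hrn j (by omega) E hinv hUc hUs)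
        _ ≤ ∑ A ∈ cand n r k j E, (gfam n r k t (j+1) (insert A E)).card := by
            have := Finset.card_nsmul_le_sum (cand n r k j E)
              (fun A => (gfam n r k t (j+1) (insert A E)).card)
              (∏ s ∈ Finset.range t, trm n r k (j+1+1+s)) hstep
            simpa [smul_eq_mul] using this

/-- Lower bound for the number of edges of `KG^r_{n,k}` inside the union of the
stars `S_1, …, S_{r-1}` together with `m` extra sets avoiding `{1,…,r-1}`. -/
theorem edges_in_stars_plus_T (n k r m : ℕ) (hr : 2 ≤ r) (hk : 1 ≤ k)
    (hn : r * k ≤ n) (hm : 1 ≤ m)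
    (T : Finset (Finset ℕ))
    (hT : ∀ B ∈ T, B ⊆ Finset.range n ∧ B.card = k ∧ Disjoint B (Finset.range (r - 1)))
    (hTm : T.card = m)
    (𝒜 : Finset (Finset ℕ))
    (h𝒜 : 𝒜 = ((Finset.range n).powersetCard k).filter
        (fun A => (A ∩ Finset.range (r - 1)).Nonempty) ∪ T)
    (h𝒜card : 𝒜.card = Nat.choose n k - Nat.choose (n - r + 1) k + m) :
    m * ∏ i ∈ Finset.Icc 1 (r - 1), Nat.choose (n - i * k - (r - 1 - i) - 1) (k - 1)
      ≤ ((𝒜.powersetCard r).filter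
          (fun E => ∀ A ∈ E, ∀ B ∈ E, A ≠ B → Disjoint A B)).card := by
  classical
  have hrn : r ≤ n := by
    calc r = r * 1 := (mul_one r).symm
      _ ≤ r * k := Nat.mul_le_mul_left r hk
      _ ≤ n := hn
  set Edges : Finset (Finset (Finset ℕ)) :=
    T.biUnion (fun B => gfam n r k (r - 1) 0 {B}) with hEdges
  have hsingle : ∀ B ∈ T, ({B} : Finset (Finset ℕ)).sup id = B := by
    intro B _; simp
  have hinvB : ∀ B ∈ T, (({B} : Finset (Finset ℕ)).sup id) ∩ Finset.range (r - 1)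
      = Finset.range 0 := by
    intro B hB
    rw [hsingle B hB, Finset.range_zero]
    exact Finset.disjoint_iff_inter_eq_empty.1 (hT B hB).2.2
  have hEsub : Edges ⊆ (𝒜.powersetCard r).filter
      (fun E => ∀ A ∈ E, ∀ B ∈ E, A ≠ B → Disjoint A B) := by
    intro F hF
    rw [hEdges, Finset.mem_biUnion] at hF
    obtain ⟨B, hB, hF⟩ := hF
    obtain ⟨hBn, hBk, hBd⟩ := hT B hB
    rw [Finset.mem_filter, Finset.mem_powersetCard]
    obtain ⟨hsub, hnew⟩ := gfam_new (r - 1) 0 {B} F hF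
    refine ⟨⟨?_, ?_⟩, ?_⟩
    · -- F ⊆ 𝒜
      intro C hC
      by_cases hCB : C ∈ ({B} : Finset (Finset ℕ))
      · rw [Finset.mem_singleton] at hCB
        subst hCB
        rw [h𝒜]
        exact Finset.mem_union_right _ hB
      · obtain ⟨h1, h2, _, i, _, h4⟩ := hnew C hC hCB
        rw [h𝒜]
        apply Finset.mem_union_left
        rw [Finset.mem_filter, Finset.mem_powersetCard]
        exact ⟨⟨h1, h2⟩, ⟨i, by rw [h4]; exact Finset.mem_singleton_self i⟩⟩
    · -- card
      have := gfam_card_eq (r - 1) 0 {B} F hF (by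
        intro C hC
        rw [Finset.mem_singleton] at hC
        subst hC
        intro x hx
        obtain ⟨h1, h2⟩ := Finset.mem_inter.1 hx
        exact absurd h2 (Finset.disjoint_left.1 hBd h1))
      rw [this, Finset.card_singleton]
      omega
    · -- pairwise disjoint
      apply gfam_disj (r - 1) 0 {B} F hF
      intro C hC D hD hCD
      rw [Finset.mem_singleton] at hC hD
      subst hC; subst hD
      exact absurd rfl hCD
  have hfibT : ∀ B ∈ T, ∀ B' ∈ T, B ≠ B' →
      Disjoint (gfam n r k (r - 1) 0 {B}) (gfam n r k (r - 1) 0 {B'}) := by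
    intro B hB B' hB' hne
    rw [Finset.disjoint_left]
    intro F hF hF'
    have hB'F : B' ∈ F := (gfam_new (r - 1) 0 {B'} F hF').1 (Finset.mem_singleton_self B')
    have hB'B : B' ∉ ({B} : Finset (Finset ℕ)) := by
      rw [Finset.mem_singleton]; exact fun h => hne h.symm
    obtain ⟨_, _, _, i, _, h4⟩ := (gfam_new (r - 1) 0 {B} F hF).2 B' hB'F hB'B
    have hi : i ∈ B' ∩ Finset.range (r - 1) := by
      rw [h4]; exact Finset.mem_singleton_self i
    obtain ⟨hi1, hi2⟩ := Finset.mem_inter.1 hi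
    exact Finset.disjoint_left.1 (hT B' hB').2.2 hi1 hi2
  have hP : ∀ B ∈ T,
      ∏ s ∈ Finset.range (r - 1), trm n r k (0+1+s)
        ≤ (gfam n r k (r - 1) 0 {B}).card := by
    intro B hB
    obtain ⟨hBn, hBk, hBd⟩ := hT B hB
    apply gfam_card hk hrn (r - 1) 0 {B}
    · omega
    · exact hinvB B hB
    · rw [hsingle B hB]; omega
    · rw [hsingle B hB]; exact hBn
  have hEcard : m * ∏ s ∈ Finset.range (r - 1), trm n r k (0+1+s) ≤ Edges.card := by
    rw [hEdges, Finset.card_biUnion hfibT]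
    calc m * ∏ s ∈ Finset.range (r - 1), trm n r k (0+1+s)
        = ∑ _B ∈ T, ∏ s ∈ Finset.range (r - 1), trm n r k (0+1+s) := by
          rw [Finset.sum_const, hTm, smul_eq_mul]
      _ ≤ ∑ B ∈ T, (gfam n r k (r - 1) 0 {B}).card := Finset.sum_le_sum hP
  have hprod : ∏ i ∈ Finset.Icc 1 (r - 1), Nat.choose (n - i * k - (r - 1 - i) - 1) (k - 1)
      = ∏ s ∈ Finset.range (r - 1), trm n r k (0+1+s) := by
    have h1 : Finset.Icc 1 (r - 1) = Finset.Ico 1 r := by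
      rw [← Finset.Ico_add_one_right_eq_Icc]
      congr 1
      omega
    rw [h1, Finset.prod_Ico_eq_prod_range]
    apply Finset.prod_congr (by congr 1)
    intro s _
    have h : 0 + 1 + s = 1 + s := by omega
    rw [h]
    rfl
  rw [hprod]
  exact le_trans hEcard (Finset.card_le_card hEsub)
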